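/- arXiv:2001.09643 — 2 statements merged into one kernel-verified Lean document; each statement's English description precedes it below -/
import Mathlib

section
/- If X is a non-singular simplicial set, then the simplicial mapping set X^{Δ[1]} is non-singular. -/
open CategoryTheory Simplicial Opposite MonoidalCategory Limits

/-- The representing map of a simplex is degreewise injective. -/
def SSet.RepInj (X : SSet.{0}) {n : ℕ} (x : X _⦋n⦌) : Prop :=
  ∀ m : SimplexCategoryᵒᵖ, Function.Injective (((@SSet.yonedaEquiv X ⦋n⦌).symm x).app m)

/-- The `i`-th vertex `x εᵢ` of a simplex. -/
def SSet.vert (X : SSet.{0}) {n : ℕ} (x : X _⦋n⦌) (i : Fin (n + 1)) : X _⦋0⦌ :=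
  X.map (SimplexCategory.const ⦋0⦌ ⦋n⦌ i).op x

/-- A simplex is degenerate if it is obtained from a simplex of strictly
lower degree by the action of an operator. -/
def SSet.IsDegenerate (X : SSet.{0}) {n : ℕ} (x : X _⦋n⦌) : Prop :=
  ∃ (m : ℕ) (_ : m < n) (α : (⦋n⦌ : SimplexCategory) ⟶ ⦋m⦌) (y : X _⦋m⦌),
    X.map α.op y = x

/-- A simplicial set is non-singular if every non-degenerate simplex has a
degreewise injective representing map. -/
def SSet.NonSingular (X : SSet.{0}) : Prop :=
  ∀ (n : ℕ) (x : X _⦋n⦌), ¬ X.IsDegenerate x → X.RepInj x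


/-- The simplicial mapping set `X^K`, whose `n`-simplices are the simplicial
maps `Δ[n] × K → X`. -/
noncomputable def SSet.sHom (K X : SSet.{0}) : SSet.{0} where
  obj m := SSet.stdSimplex.obj m.unop ⊗ K ⟶ X
  map α := TypeCat.ofHom fun f => (SSet.stdSimplex.map α.unop ▷ K) ≫ f
  map_id m := by
    ext f : 3
    simp
    erw [CategoryTheory.Functor.map_id]
    simp
  map_comp α β := by
    ext f : 3
    simp
    erw [CategoryTheory.Functor.map_comp]
    simp [MonoidalCategory.comp_whiskerRight]

namespace NSAux

open SimplexCategory SSet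

lemma coe_δ {m : ℕ} (j : Fin (m+2)) (s : Fin (m+1)) :
    ((SimplexCategory.δ j).toOrderHom s : ℕ) = if (s:ℕ) < (j:ℕ) then (s:ℕ) else (s:ℕ)+1 := by
  change (Fin.succAbove j s : ℕ) = _
  rw [Fin.succAbove]
  split_ifs with h1 h2 h3 <;>
    simp only [Fin.lt_def, Fin.coe_castSucc, Fin.val_succ] at * <;> omega

lemma coe_σ {m : ℕ} (i : Fin (m+1)) (t : Fin (m+2)) :
    ((SimplexCategory.σ i).toOrderHom t : ℕ) = if (i:ℕ) < (t:ℕ) then (t:ℕ)-1 else (t:ℕ) := by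
  change (Fin.predAbove i t : ℕ) = _
  rw [Fin.predAbove]
  have hc : (i.castSucc < t) ↔ (i:ℕ) < (t:ℕ) := by rw [Fin.lt_def]; simp
  split_ifs with h1 h2 h3
  · simp [Fin.coe_pred]
  · exact absurd (hc.mp h1) h2
  · exact absurd (hc.mpr h3) h1
  · simp [Fin.coe_castPred]

lemma hom_ext_nat {Δ₁ Δ₂ : SimplexCategory} {φ ψ : Δ₁ ⟶ Δ₂}
    (h : ∀ t, (φ.toOrderHom t : ℕ) = (ψ.toOrderHom t : ℕ)) : φ = ψ :=
  SimplexCategory.Hom.ext _ _ (OrderHom.ext _ _ (funext fun t => Fin.ext (h t)))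

lemma map_comp_apply (X : SSet.{0}) {Δ₁ Δ₂ Δ₃ : SimplexCategory}
    (u : Δ₁ ⟶ Δ₂) (v : Δ₂ ⟶ Δ₃) (z : X.obj (op Δ₃)) :
    X.map (u ≫ v).op z = X.map u.op (X.map v.op z) := by
  rw [op_comp, FunctorToTypes.map_comp_apply]

/-- Existence part of the Eilenberg-Zilber lemma. -/
lemma exists_nondeg (X : SSet.{0}) : ∀ (n : ℕ) (x : X _⦋n⦌),
    ∃ (m : ℕ) (e : (⦋n⦌ : SimplexCategory) ⟶ ⦋m⦌) (y : X _⦋m⦌),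
      Function.Surjective e.toOrderHom ∧ ¬ X.IsDegenerate y ∧ X.map e.op y = x := by
  intro n
  induction n using Nat.strong_induction_on with
  | _ n IH =>
    intro x
    by_cases hx : X.IsDegenerate x
    · obtain ⟨m, hm, α, y₀, hy₀⟩ := hx
      let k := (image α).len
      have hobj : image α = (⦋k⦌ : SimplexCategory) := (SimplexCategory.mk_len _).symm
      let e' : (⦋n⦌ : SimplexCategory) ⟶ ⦋k⦌ := factorThruImage α ≫ eqToHom hobj
      let i' : (⦋k⦌ : SimplexCategory) ⟶ ⦋m⦌ := eqToHom hobj.symm ≫ image.ι α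
      have hfac : e' ≫ i' = α := by simp [e', i']
      have hke : Epi e' := by
        have : Epi (factorThruImage α) := inferInstance
        exact epi_comp _ _
      have hki : Mono i' := by
        have : Mono (image.ι α) := inferInstance
        exact mono_comp _ _
      have hk : k < n := by
        have h1 : k ≤ m := by
          have := SimplexCategory.len_le_of_mono i'
          simpa using this
        omega
      obtain ⟨l, e₂, y, hsurj, hnd, hmap⟩ := IH k hk (X.map i'.op y₀)
      refine ⟨l, e' ≫ e₂, y, ?_, hnd, ?_⟩
      · rw [SimplexCategory.comp_toOrderHom, OrderHom.comp_coe]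
        exact Function.Surjective.comp hsurj
          ((SimplexCategory.epi_iff_surjective).mp hke)
      · rw [map_comp_apply, hmap, ← FunctorToTypes.map_comp_apply, ← op_comp, hfac, hy₀]
    · exact ⟨n, 𝟙 _, x, by
        rw [SimplexCategory.id_toOrderHom]; exact Function.surjective_id, hx, by simp⟩

lemma vert_map (X : SSet.{0}) {n m : ℕ} (e : (⦋n⦌:SimplexCategory) ⟶ ⦋m⦌) (y : X _⦋m⦌)
    (t : Fin (n+1)) :
    X.vert (X.map e.op y) t = X.vert y (e.toOrderHom t) := by
  unfold SSet.vert
  rw [← map_comp_apply, SimplexCategory.const_comp]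

lemma vert_injective {X : SSet.{0}} (hX : X.NonSingular) {n : ℕ} {x : X _⦋n⦌}
    (hx : ¬ X.IsDegenerate x) : Function.Injective (X.vert x) := by
  intro i j hij
  have h := hX n x hx (op ⦋0⦌) (a₁ := ULift.up (SimplexCategory.const ⦋0⦌ ⦋n⦌ i))
    (a₂ := ULift.up (SimplexCategory.const ⦋0⦌ ⦋n⦌ j)) hij
  have := congrArg (fun g => (ULift.down g).toOrderHom 0) h
  simpa [SimplexCategory.const] using this

lemma vert_eq_between {X : SSet.{0}} (hX : X.NonSingular) {n : ℕ} (x : X _⦋n⦌)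
    {i j k : Fin (n+1)} (hij : X.vert x i = X.vert x j) (h1 : i ≤ k) (h2 : k ≤ j) :
    X.vert x i = X.vert x k := by
  obtain ⟨m, e, y, hsurj, hnd, rfl⟩ := exists_nondeg X n x
  rw [vert_map, vert_map] at hij
  rw [vert_map, vert_map]
  have hinj := vert_injective hX hnd
  have he : e.toOrderHom i = e.toOrderHom j := hinj hij
  have hm1 := e.toOrderHom.monotone h1
  have hm2 := e.toOrderHom.monotone h2
  have : e.toOrderHom k = e.toOrderHom i := le_antisymm (he ▸ hm2) hm1
  rw [this]

lemma collapse_fun {m : ℕ} (i : Fin (m+1)) (t : Fin (m+2)) :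
    (((SimplexCategory.σ i) ≫ (SimplexCategory.δ i.succ)).toOrderHom t : ℕ) =
      if (t:ℕ) = (i:ℕ)+1 then (i:ℕ) else (t:ℕ) := by
  rw [SimplexCategory.comp_toOrderHom]
  simp only [OrderHom.comp_coe, Function.comp_apply]
  rw [coe_δ, coe_σ]
  simp only [Fin.val_succ]
  split_ifs <;> omega

lemma degeneracy_of_vert_eq {X : SSet.{0}} (hX : X.NonSingular) {n : ℕ} (x : X _⦋n+1⦌)
    (i : Fin (n+1)) (h : X.vert x i.castSucc = X.vert x i.succ) :
    X.map ((SimplexCategory.σ i) ≫ (SimplexCategory.δ i.succ)).op x = x := by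
  obtain ⟨m, e, y, hsurj, hnd, rfl⟩ := exists_nondeg X (n+1) x
  rw [vert_map, vert_map] at h
  have he : e.toOrderHom i.castSucc = e.toOrderHom i.succ := vert_injective hX hnd h
  rw [← map_comp_apply]
  have hre : (SimplexCategory.σ i ≫ SimplexCategory.δ i.succ) ≫ e = e := by
    apply SimplexCategory.Hom.ext
    apply OrderHom.ext; funext t
    rw [SimplexCategory.comp_toOrderHom]
    simp only [OrderHom.comp_coe, Function.comp_apply]
    have hr : (SimplexCategory.σ i ≫ SimplexCategory.δ i.succ).toOrderHom t =
        if (t:ℕ) = (i:ℕ)+1 then i.castSucc else t := by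
      apply Fin.ext; rw [collapse_fun]; split_ifs <;> simp
    rw [hr]
    split_ifs with ht
    · have htt : t = i.succ := Fin.ext (by simpa using ht)
      rw [htt, ← he]
    · rfl
  rw [hre]

variable (X : SSet.{0})

/-- Evaluation of a map `Δ[Δ'] ⊗ Δ[1] ⟶ X` at a pair of simplex-category maps. -/
def fap {Δ' : SimplexCategory} (f : SSet.stdSimplex.obj Δ' ⊗ Δ[1] ⟶ X)
    {Δ : SimplexCategory} (u : Δ ⟶ Δ') (v : Δ ⟶ ⦋1⦌) : X.obj (op Δ) :=
  f.app (op Δ) ((SSet.stdSimplex.objEquiv).symm u,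
    (SSet.stdSimplex.objEquiv).symm v)

lemma fap_natural {Δ' : SimplexCategory} (f : SSet.stdSimplex.obj Δ' ⊗ Δ[1] ⟶ X)
    {Δ₁ Δ₂ : SimplexCategory} (θ : Δ₁ ⟶ Δ₂) (u : Δ₂ ⟶ Δ') (v : Δ₂ ⟶ ⦋1⦌) :
    fap X f (θ ≫ u) (θ ≫ v) = X.map θ.op (fap X f u v) := by
  unfold fap
  exact NatTrans.naturality_apply (D := Type) f θ.op
    (⟨(SSet.stdSimplex.objEquiv).symm u, (SSet.stdSimplex.objEquiv).symm v⟩ :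
      (SSet.stdSimplex.obj Δ' ⊗ Δ[1]).obj (op Δ₂))

/-- The vertices of the prism `f`. -/
def Vtx {n : ℕ} (f : Δ[n] ⊗ Δ[1] ⟶ X) (j : Fin (n+1)) (ε : Fin 2) : X _⦋0⦌ :=
  fap X f (SimplexCategory.const ⦋0⦌ ⦋n⦌ j) (SimplexCategory.const ⦋0⦌ ⦋1⦌ ε)

lemma vert_fap {n : ℕ} (f : Δ[n] ⊗ Δ[1] ⟶ X) {l : ℕ} (u : (⦋l⦌ : SimplexCategory) ⟶ ⦋n⦌)
    (v : (⦋l⦌ : SimplexCategory) ⟶ ⦋1⦌) (t : Fin (l+1)) :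
    X.vert (fap X f u v) t = Vtx X f (u.toOrderHom t) (v.toOrderHom t) := by
  unfold SSet.vert Vtx
  rw [← SimplexCategory.const_comp ⦋0⦌ u, ← SimplexCategory.const_comp ⦋0⦌ v, fap_natural]

lemma sHom_map_fap {n : ℕ} (f : (SSet.sHom Δ[1] X).obj (op ⦋n⦌)) {Δm : SimplexCategory}
    (g : Δm ⟶ ⦋n⦌) {Δ : SimplexCategory} (u : Δ ⟶ Δm) (v : Δ ⟶ ⦋1⦌) :
    fap X ((SSet.sHom Δ[1] X).map g.op f) u v = fap X f (u ≫ g) v :=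
  rfl

/-- First component of the `k`-th maximal prism `[n+1] → [n] × [1]`. -/
def pα {n : ℕ} (k : Fin (n+1)) : (⦋n+1⦌ : SimplexCategory) ⟶ ⦋n⦌ :=
  SimplexCategory.mkHom
    ⟨fun t => ⟨if (t:ℕ) ≤ (k:ℕ) then (t:ℕ) else (t:ℕ)-1, by
        have := t.isLt; have := k.isLt
        split_ifs <;> omega⟩,
     fun s t hst => by
       have h : (s:ℕ) ≤ (t:ℕ) := hst
       simp only [Fin.mk_le_mk]; split_ifs <;> omega⟩

/-- Second component of the `k`-th maximal prism. -/
def pε {n : ℕ} (k : Fin (n+1)) : (⦋n+1⦌ : SimplexCategory) ⟶ ⦋1⦌ :=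
  SimplexCategory.mkHom
    ⟨fun t => ⟨if (t:ℕ) ≤ (k:ℕ) then 0 else 1, by
        split_ifs <;> omega⟩,
     fun s t hst => by
       have h : (s:ℕ) ≤ (t:ℕ) := hst
       simp only [Fin.mk_le_mk]; split_ifs <;> omega⟩

lemma coe_pα {n : ℕ} (k : Fin (n+1)) (t : Fin (n+2)) :
    ((pα k).toOrderHom t : ℕ) = if (t:ℕ) ≤ (k:ℕ) then (t:ℕ) else (t:ℕ)-1 := rfl

lemma coe_pε {n : ℕ} (k : Fin (n+1)) (t : Fin (n+2)) :
    ((pε k).toOrderHom t : ℕ) = if (t:ℕ) ≤ (k:ℕ) then 0 else 1 := rfl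

/-- The map `Δ → ⦋n+1⦌` through which `(u,v)` factors. -/
def θmap {n : ℕ} {Δ : SimplexCategory} (u : Δ ⟶ ⦋n⦌) (v : Δ ⟶ ⦋1⦌) : Δ ⟶ ⦋n+1⦌ :=
  SimplexCategory.Hom.mk
    ⟨fun i => ⟨if (v.toOrderHom i : ℕ) = 0 then (u.toOrderHom i : ℕ)
        else (u.toOrderHom i : ℕ)+1, by
          have := (u.toOrderHom i).isLt
          simp only [SimplexCategory.len_mk] at *
          split_ifs <;> omega⟩,
      fun s t hst => by
        have hu : (u.toOrderHom s : ℕ) ≤ (u.toOrderHom t : ℕ) := u.toOrderHom.monotone hst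
        have hv : (v.toOrderHom s : ℕ) ≤ (v.toOrderHom t : ℕ) := v.toOrderHom.monotone hst
        simp only [Fin.mk_le_mk]; split_ifs <;> omega⟩

lemma coe_θmap {n : ℕ} {Δ : SimplexCategory} (u : Δ ⟶ ⦋n⦌) (v : Δ ⟶ ⦋1⦌)
    (i : Fin (Δ.len + 1)) :
    ((θmap u v).toOrderHom i : ℕ) = if (v.toOrderHom i : ℕ) = 0 then (u.toOrderHom i : ℕ)
        else (u.toOrderHom i : ℕ)+1 := rfl

/-- Every pair of maps `(u, v) : Δ → ⦋n⦌ × ⦋1⦌` factors through a maximal prism. -/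
lemma prism_decomp {n : ℕ} {Δ : SimplexCategory} (u : Δ ⟶ ⦋n⦌) (v : Δ ⟶ ⦋1⦌) :
    ∃ (k : Fin (n+1)) (θ : Δ ⟶ ⦋n+1⦌), θ ≫ pα k = u ∧ θ ≫ pε k = v := by
  classical
  let T : Finset (Fin (Δ.len+1)) := Finset.univ.filter (fun i => (v.toOrderHom i : ℕ) = 0)
  let k : Fin (n+1) := T.sup (fun i => u.toOrderHom i)
  have hk1 : ∀ i, (v.toOrderHom i : ℕ) = 0 → u.toOrderHom i ≤ k := fun i hi =>
    Finset.le_sup (by simp only [T, Finset.mem_filter, Finset.mem_univ, true_and]; exact hi)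
  have hk2 : ∀ i, (v.toOrderHom i : ℕ) ≠ 0 → k ≤ u.toOrderHom i := by
    intro i hi
    apply Finset.sup_le
    intro j hj
    have hj0 : (v.toOrderHom j : ℕ) = 0 := by
      simpa only [T, Finset.mem_filter, Finset.mem_univ, true_and] using hj
    apply u.toOrderHom.monotone
    by_contra hij
    push_neg at hij
    have hm : (v.toOrderHom i : ℕ) ≤ (v.toOrderHom j : ℕ) := v.toOrderHom.monotone hij.le
    omega
  refine ⟨k, θmap u v, ?_, ?_⟩
  · apply SimplexCategory.Hom.ext
    apply OrderHom.ext; funext i; apply Fin.ext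
    rw [SimplexCategory.comp_toOrderHom]
    simp only [OrderHom.comp_coe, Function.comp_apply]
    rw [coe_pα, coe_θmap]
    by_cases hvi : (v.toOrderHom i : ℕ) = 0
    · have h1 : ((u.toOrderHom i : Fin (n+1)) : ℕ) ≤ (k:ℕ) := hk1 i hvi
      simp only [hvi, if_true]
      rw [if_pos h1]
    · have h2 : (k:ℕ) ≤ ((u.toOrderHom i : Fin (n+1)) : ℕ) := hk2 i hvi
      simp only [hvi, if_false]
      rw [if_neg (by omega)]
      omega
  · apply SimplexCategory.Hom.ext
    apply OrderHom.ext; funext i; apply Fin.ext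
    rw [SimplexCategory.comp_toOrderHom]
    simp only [OrderHom.comp_coe, Function.comp_apply]
    rw [coe_pε, coe_θmap]
    by_cases hvi : (v.toOrderHom i : ℕ) = 0
    · have h1 : ((u.toOrderHom i : Fin (n+1)) : ℕ) ≤ (k:ℕ) := hk1 i hvi
      simp only [hvi, if_true]
      rw [if_pos h1]
    · have h2 : (k:ℕ) ≤ ((u.toOrderHom i : Fin (n+1)) : ℕ) := hk2 i hvi
      simp only [hvi, if_false]
      rw [if_neg (by omega)]
      have := (v.toOrderHom i).isLt
      simp only [SimplexCategory.len_mk] at this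
      omega

set_option maxHeartbeats 2000000 in
/-- The heart of the argument: if the two columns at `a` and `a+1` of the prism `f`
have the same vertices, then `f` is degenerate. -/
lemma main_aux (hX : X.NonSingular) {n : ℕ} (f : (SSet.sHom Δ[1] X).obj (op ⦋n⦌))
    (a' b' : Fin (n+1)) (hab : a' < b')
    (hcol : ∀ ε : Fin 2, Vtx X f a' ε = Vtx X f b' ε) :
    (SSet.sHom Δ[1] X).IsDegenerate f := by
  obtain ⟨n', rfl⟩ : ∃ n', n = n'+1 := by
    cases n with
    | zero =>
      exfalso
      have h := hab
      rw [Fin.lt_def] at h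
      omega
    | succ n' => exact ⟨n', rfl⟩
  change SSet.stdSimplex.obj ⦋n'+1⦌ ⊗ Δ[1] ⟶ X at f
  have hab' : (a':ℕ) < (b':ℕ) := hab
  have hb := b'.isLt
  obtain ⟨a, hav⟩ : ∃ a : Fin (n'+1), (a:ℕ) = (a':ℕ) := ⟨⟨(a':ℕ), by omega⟩, rfl⟩
  -- adjacent vertex equalities
  have hVadj : ∀ ε : Fin 2, Vtx X f a.castSucc ε = Vtx X f a.succ ε := by
    intro ε
    set xe := fap X f (𝟙 (⦋n'+1⦌ : SimplexCategory))
      (SimplexCategory.const ⦋n'+1⦌ ⦋1⦌ ε) with hxe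
    have hv : ∀ t, X.vert xe t = Vtx X f t ε := by
      intro t
      rw [hxe, vert_fap]
      rfl
    have h1 : X.vert xe a' = X.vert xe b' := by rw [hv, hv]; exact hcol ε
    obtain ⟨c, hcv⟩ : ∃ c : Fin (n'+2), (c:ℕ) = (a':ℕ)+1 := ⟨⟨(a':ℕ)+1, by omega⟩, rfl⟩
    have h2 := vert_eq_between hX xe h1 (k := c)
      (by rw [Fin.le_def]; omega) (by rw [Fin.le_def]; omega)
    rw [hv, hv] at h2
    rw [show a.castSucc = a' from Fin.ext (by simp [hav]),
      show a.succ = c from Fin.ext (by simp [Fin.val_succ, hav, hcv])]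
    exact h2
  have hV0 := hVadj 0
  have hV1 := hVadj 1
  set rr : (⦋n'+1⦌ : SimplexCategory) ⟶ ⦋n'+1⦌ :=
    SimplexCategory.σ a ≫ SimplexCategory.δ a.succ with hrr
  -- the key prism identities
  have key : ∀ k : Fin (n'+2),
      fap X f (pα k ≫ rr) (pε k) = fap X f (pα k) (pε k) := by
    intro k
    set yk := fap X f (pα k) (pε k) with hyk
    rcases Nat.lt_trichotomy (k:ℕ) ((a:ℕ)+1) with hk | hk | hk
    · -- k ≤ a
      have hk' : (k:ℕ) ≤ (a:ℕ) := by omega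
      have hvert : X.vert yk ((a.succ).castSucc) = X.vert yk ((a.succ).succ) := by
        rw [hyk, vert_fap, vert_fap]
        rw [show (pα k).toOrderHom (a.succ).castSucc = a.castSucc from Fin.ext (by
          rw [coe_pα]; simp only [Fin.coe_castSucc, Fin.val_succ]; split_ifs <;> omega)]
        rw [show (pα k).toOrderHom (a.succ).succ = a.succ from Fin.ext (by
          rw [coe_pα]; simp only [Fin.val_succ]; split_ifs <;> omega)]
        rw [show (pε k).toOrderHom (a.succ).castSucc = (1 : Fin 2) from Fin.ext (by
          rw [coe_pε]; simp only [Fin.coe_castSucc, Fin.val_succ, Fin.val_one]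
          split_ifs <;> omega)]
        rw [show (pε k).toOrderHom (a.succ).succ = (1 : Fin 2) from Fin.ext (by
          rw [coe_pε]; simp only [Fin.val_succ, Fin.val_one]; split_ifs <;> omega)]
        exact hV1
      have hd := degeneracy_of_vert_eq hX yk a.succ hvert
      have e1 : pα k ≫ rr =
          (SimplexCategory.σ a.succ ≫ SimplexCategory.δ a.succ.succ) ≫ pα k := by
        apply hom_ext_nat; intro t
        simp only [hrr, SimplexCategory.comp_toOrderHom, OrderHom.comp_coe,
          Function.comp_apply, coe_pα, coe_δ, coe_σ, Fin.val_succ, Fin.coe_castSucc]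
        split_ifs <;> omega
      have e2 : pε k =
          (SimplexCategory.σ a.succ ≫ SimplexCategory.δ a.succ.succ) ≫ pε k := by
        apply hom_ext_nat; intro t
        simp only [SimplexCategory.comp_toOrderHom, OrderHom.comp_coe,
          Function.comp_apply, coe_pε, coe_δ, coe_σ, Fin.val_succ, Fin.coe_castSucc]
        split_ifs <;> omega
      rw [e1]
      conv_lhs => rw [e2]
      rw [fap_natural, ← hyk]
      exact hd
    · -- k = a+1
      set k0 : Fin (n'+2) := a.castSucc with hk0
      set y0 := fap X f (pα k0) (pε k0) with hy0
      have hvert1 : X.vert yk (a.castSucc.castSucc) = X.vert yk (a.castSucc.succ) := by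
        rw [hyk, vert_fap, vert_fap]
        rw [show (pα k).toOrderHom a.castSucc.castSucc = a.castSucc from Fin.ext (by
          rw [coe_pα]; simp only [Fin.coe_castSucc]; split_ifs <;> omega)]
        rw [show (pα k).toOrderHom a.castSucc.succ = a.succ from Fin.ext (by
          rw [coe_pα]; simp only [Fin.coe_castSucc, Fin.val_succ]; split_ifs <;> omega)]
        rw [show (pε k).toOrderHom a.castSucc.castSucc = (0 : Fin 2) from Fin.ext (by
          rw [coe_pε]; simp only [Fin.coe_castSucc, Fin.val_zero]; split_ifs <;> omega)]
        rw [show (pε k).toOrderHom a.castSucc.succ = (0 : Fin 2) from Fin.ext (by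
          rw [coe_pε]; simp only [Fin.coe_castSucc, Fin.val_succ, Fin.val_zero]
          split_ifs <;> omega)]
        exact hV0
      have G1 := degeneracy_of_vert_eq hX yk a.castSucc hvert1
      have hvert2 : X.vert y0 ((a.succ).castSucc) = X.vert y0 ((a.succ).succ) := by
        rw [hy0, vert_fap, vert_fap]
        rw [show (pα k0).toOrderHom (a.succ).castSucc = a.castSucc from Fin.ext (by
          rw [coe_pα]; simp only [hk0, Fin.coe_castSucc, Fin.val_succ]
          split_ifs <;> omega)]
        rw [show (pα k0).toOrderHom (a.succ).succ = a.succ from Fin.ext (by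
          rw [coe_pα]; simp only [hk0, Fin.coe_castSucc, Fin.val_succ]
          split_ifs <;> omega)]
        rw [show (pε k0).toOrderHom (a.succ).castSucc = (1 : Fin 2) from Fin.ext (by
          rw [coe_pε]; simp only [hk0, Fin.coe_castSucc, Fin.val_succ, Fin.val_one]
          split_ifs <;> omega)]
        rw [show (pε k0).toOrderHom (a.succ).succ = (1 : Fin 2) from Fin.ext (by
          rw [coe_pε]; simp only [hk0, Fin.coe_castSucc, Fin.val_succ, Fin.val_one]
          split_ifs <;> omega)]
        exact hV1
      have G2 := degeneracy_of_vert_eq hX y0 a.succ hvert2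
      have eg1 : SimplexCategory.δ a.castSucc.succ ≫ pα k
          = SimplexCategory.δ a.castSucc.succ ≫ pα k0 := by
        apply hom_ext_nat; intro t
        simp only [SimplexCategory.comp_toOrderHom, OrderHom.comp_coe,
          Function.comp_apply, coe_pα, coe_δ, hk0, Fin.val_succ, Fin.coe_castSucc]
        split_ifs <;> omega
      have eg2 : SimplexCategory.δ a.castSucc.succ ≫ pε k
          = SimplexCategory.δ a.castSucc.succ ≫ pε k0 := by
        apply hom_ext_nat; intro t
        simp only [SimplexCategory.comp_toOrderHom, OrderHom.comp_coe,
          Function.comp_apply, coe_pε, coe_δ, hk0, Fin.val_succ, Fin.coe_castSucc]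
        split_ifs <;> omega
      have glue : X.map (SimplexCategory.δ a.castSucc.succ).op yk
          = X.map (SimplexCategory.δ a.castSucc.succ).op y0 := by
        rw [hyk, hy0, ← fap_natural, ← fap_natural, eg1, eg2]
      have e3a : pα k ≫ rr =
          (SimplexCategory.σ a.castSucc ≫ SimplexCategory.δ a.succ.succ) ≫ pα k0 := by
        apply hom_ext_nat; intro t
        simp only [hrr, hk0, SimplexCategory.comp_toOrderHom, OrderHom.comp_coe,
          Function.comp_apply, coe_pα, coe_δ, coe_σ, Fin.val_succ, Fin.coe_castSucc]
        split_ifs <;> omega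
      have e3e : pε k =
          (SimplexCategory.σ a.castSucc ≫ SimplexCategory.δ a.succ.succ) ≫ pε k0 := by
        apply hom_ext_nat; intro t
        simp only [hk0, SimplexCategory.comp_toOrderHom, OrderHom.comp_coe,
          Function.comp_apply, coe_pε, coe_δ, coe_σ, Fin.val_succ, Fin.coe_castSucc]
        split_ifs <;> omega
      have hδσ : SimplexCategory.δ (a.castSucc.succ) ≫ SimplexCategory.σ a.succ = 𝟙 _ :=
        SimplexCategory.δ_comp_σ_self' (Fin.succ_castSucc a)
      have hw : X.map (SimplexCategory.δ a.castSucc.succ).op y0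
          = X.map (SimplexCategory.δ a.succ.succ).op y0 := by
        conv_lhs => rw [← G2]
        rw [map_comp_apply, ← map_comp_apply, hδσ]
        simp
      rw [e3a]
      conv_lhs => rw [e3e]
      rw [fap_natural, ← hy0, map_comp_apply, ← hw, ← glue, ← map_comp_apply, G1]
    · -- k ≥ a+2
      have hk' : (a:ℕ)+2 ≤ (k:ℕ) := by omega
      have hvert : X.vert yk (a.castSucc.castSucc) = X.vert yk (a.castSucc.succ) := by
        rw [hyk, vert_fap, vert_fap]
        rw [show (pα k).toOrderHom a.castSucc.castSucc = a.castSucc from Fin.ext (by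
          rw [coe_pα]; simp only [Fin.coe_castSucc]; split_ifs <;> omega)]
        rw [show (pα k).toOrderHom a.castSucc.succ = a.succ from Fin.ext (by
          rw [coe_pα]; simp only [Fin.coe_castSucc, Fin.val_succ]; split_ifs <;> omega)]
        rw [show (pε k).toOrderHom a.castSucc.castSucc = (0 : Fin 2) from Fin.ext (by
          rw [coe_pε]; simp only [Fin.coe_castSucc, Fin.val_zero]; split_ifs <;> omega)]
        rw [show (pε k).toOrderHom a.castSucc.succ = (0 : Fin 2) from Fin.ext (by
          rw [coe_pε]; simp only [Fin.coe_castSucc, Fin.val_succ, Fin.val_zero]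
          split_ifs <;> omega)]
        exact hV0
      have hd := degeneracy_of_vert_eq hX yk a.castSucc hvert
      have e1 : pα k ≫ rr =
          (SimplexCategory.σ a.castSucc ≫ SimplexCategory.δ a.castSucc.succ) ≫ pα k := by
        apply hom_ext_nat; intro t
        simp only [hrr, SimplexCategory.comp_toOrderHom, OrderHom.comp_coe,
          Function.comp_apply, coe_pα, coe_δ, coe_σ, Fin.val_succ, Fin.coe_castSucc]
        split_ifs <;> omega
      have e2 : pε k =
          (SimplexCategory.σ a.castSucc ≫ SimplexCategory.δ a.castSucc.succ) ≫ pε k := by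
        apply hom_ext_nat; intro t
        simp only [SimplexCategory.comp_toOrderHom, OrderHom.comp_coe,
          Function.comp_apply, coe_pε, coe_δ, coe_σ, Fin.val_succ, Fin.coe_castSucc]
        split_ifs <;> omega
      rw [e1]
      conv_lhs => rw [e2]
      rw [fap_natural, ← hyk]
      exact hd
  -- `f` is invariant under the collapse `rr`
  have hr : (SSet.sHom Δ[1] X).map rr.op f = f := by
    apply NatTrans.ext
    funext m
    ext z
    obtain ⟨Δm⟩ := m
    obtain ⟨z1, z2⟩ := z
    show fap X ((SSet.sHom Δ[1] X).map rr.op f) z1.down z2.down = fap X f z1.down z2.down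
    change fap X f (z1.down ≫ rr) z2.down = fap X f z1.down z2.down
    obtain ⟨k, θ, hθ1, hθ2⟩ := prism_decomp z1.down z2.down
    rw [← hθ1, ← hθ2, Category.assoc, fap_natural, fap_natural, key k]
  change (SSet.sHom Δ[1] X).obj (op ⦋n'+1⦌) at f
  exact ⟨n', by omega, SimplexCategory.σ a,
    (SSet.sHom Δ[1] X).map (SimplexCategory.δ a.succ).op f, by
    rw [← map_comp_apply (SSet.sHom Δ[1] X), ← hrr, hr]⟩

end NSAux

/-- If `X` is a non-singular simplicial set, then the simplicial
mapping set `X^{Δ[1]}` is non-singular. -/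
theorem nonSingular_sHom_deltaOne (X : SSet.{0}) (hX : X.NonSingular) :
    (SSet.sHom Δ[1] X).NonSingular := by
  intro n f hf m
  obtain ⟨Δm⟩ := m
  intro g₁ g₂ hg
  by_contra hne
  have hdown : g₁.down ≠ g₂.down := fun h => hne (ULift.ext g₁ g₂ h)
  have hex : ∃ i, g₁.down.toOrderHom i ≠ g₂.down.toOrderHom i := by
    by_contra hall
    push_neg at hall
    exact hdown (SimplexCategory.Hom.ext _ _ (OrderHom.ext _ _ (funext hall)))
  obtain ⟨i, hi⟩ := hex
  have hg' : (SSet.sHom Δ[1] X).map g₁.down.op f = (SSet.sHom Δ[1] X).map g₂.down.op f := hg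
  have hcol : ∀ ε : Fin 2,
      NSAux.Vtx X f (g₁.down.toOrderHom i) ε = NSAux.Vtx X f (g₂.down.toOrderHom i) ε := by
    intro ε
    have h := congrArg (fun w => NSAux.fap X w (SimplexCategory.const ⦋0⦌ Δm i)
      (SimplexCategory.const ⦋0⦌ ⦋1⦌ ε)) hg'
    simp only at h
    rw [NSAux.sHom_map_fap, NSAux.sHom_map_fap,
      SimplexCategory.const_comp, SimplexCategory.const_comp] at h
    exact h
  rcases hi.lt_or_gt with hab | hab
  · exact absurd (NSAux.main_aux X hX f _ _ hab hcol) hf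
  · exact absurd (NSAux.main_aux X hX f _ _ hab (fun ε => (hcol ε).symm)) hf
end

section
/- Any product of non-singular simplicial sets is non-singular. -/
open CategoryTheory Simplicial Opposite MonoidalCategory Limits

namespace SSetAux

open SimplexCategory

lemma symm_app_eq (X : SSet.{0}) {n : ℕ} (x : X _⦋n⦌) (m : SimplexCategoryᵒᵖ)
    (f : Δ[n].obj m) :
    ((@SSet.yonedaEquiv X ⦋n⦌).symm x).app m f = X.map (f.down).op x := rfl

lemma vert_map (X : SSet.{0}) {n m : ℕ} (e : (⦋n⦌ : SimplexCategory) ⟶ ⦋m⦌)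
    (z : X _⦋m⦌) (i : Fin (n + 1)) :
    X.vert (X.map e.op z) i = X.vert z (e.toOrderHom i) := by
  dsimp [SSet.vert]
  rw [← FunctorToTypes.map_comp_apply, ← op_comp, SimplexCategory.const_comp]

lemma vert_inj_of_repInj (X : SSet.{0}) {n : ℕ} (x : X _⦋n⦌) (h : X.RepInj x) :
    Function.Injective (X.vert x) := by
  intro i j hij
  have h2 := h (op ⦋0⦌)
    (a₁ := ULift.up (SimplexCategory.const ⦋0⦌ ⦋n⦌ i))
    (a₂ := ULift.up (SimplexCategory.const ⦋0⦌ ⦋n⦌ j))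
    (by exact hij)
  have h3 : SimplexCategory.const ⦋0⦌ ⦋n⦌ i = SimplexCategory.const ⦋0⦌ ⦋n⦌ j :=
    congrArg ULift.down h2
  have := congrArg (fun φ => φ.toOrderHom (0 : Fin 1)) h3
  simpa using this

lemma repInj_of_vert_inj (X : SSet.{0}) {n : ℕ} (x : X _⦋n⦌)
    (h : Function.Injective (X.vert x)) : X.RepInj x := by
  intro m f g hfg
  rw [symm_app_eq, symm_app_eq] at hfg
  have hdown : f.down = g.down := by
    apply SimplexCategory.Hom.ext
    ext i
    refine congrArg Fin.val (h ?_)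
    have := congrArg (X.map (SimplexCategory.const ⦋0⦌ m.unop i).op) hfg
    rw [← FunctorToTypes.map_comp_apply, ← FunctorToTypes.map_comp_apply,
      ← op_comp, ← op_comp, SimplexCategory.const_comp, SimplexCategory.const_comp] at this
    exact this
  cases f; cases g; cases hdown; rfl

lemma exists_epi_nondeg (X : SSet.{0}) : ∀ (n : ℕ) (x : X _⦋n⦌),
    ∃ (m : ℕ) (e : (⦋n⦌ : SimplexCategory) ⟶ ⦋m⦌) (z : X _⦋m⦌),
      Epi e ∧ ¬ X.IsDegenerate z ∧ X.map e.op z = x := by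
  intro n
  induction n using Nat.strong_induction_on with
  | _ n IH =>
    intro x
    by_cases hx : X.IsDegenerate x
    · obtain ⟨m, hm, α, y, hy⟩ := hx
      obtain ⟨n', rfl⟩ : ∃ n', n = n' + 1 := ⟨n - 1, by omega⟩
      have hni : ¬ Function.Injective α.toOrderHom := by
        intro hinj
        have := Fintype.card_le_of_injective _ hinj
        simp [SimplexCategory.len_mk] at this
        omega
      obtain ⟨i, α', hα⟩ := SimplexCategory.eq_σ_comp_of_not_injective α hni
      obtain ⟨m', e', z, he', hz, hez⟩ := IH n' (by omega) (X.map α'.op y)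
      refine ⟨m', SimplexCategory.σ i ≫ e', z, ?_, hz, ?_⟩
      · have : Epi (SimplexCategory.σ i) := inferInstance
        exact epi_comp _ _
      · rw [op_comp, FunctorToTypes.map_comp_apply, hez,
          ← FunctorToTypes.map_comp_apply, ← op_comp, ← hα, hy]
    · exact ⟨n, 𝟙 _, x, inferInstance, hx, by simp⟩

lemma map_eq_self (X : SSet.{0}) (hX : X.NonSingular) {n : ℕ} (x : X _⦋n + 1⦌)
    (j : Fin (n + 1)) (k : Fin (n + 2)) (hjk : j.castSucc < k)
    (h : X.vert x j.castSucc = X.vert x k) :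
    X.map (SimplexCategory.σ j ≫ SimplexCategory.δ j.succ).op x = x := by
  obtain ⟨m, e, z, hep, hnd, hez⟩ := exists_epi_nondeg X (n + 1) x
  have hzi : Function.Injective (X.vert z) := vert_inj_of_repInj _ _ (hX m z hnd)
  have hv : ∀ i, X.vert x i = X.vert z (e.toOrderHom i) := fun i => by
    rw [← hez, vert_map]
  have h1 : e.toOrderHom j.castSucc = e.toOrderHom k := hzi (by rw [← hv, ← hv]; exact h)
  have h2 : e.toOrderHom j.castSucc = e.toOrderHom j.succ := by
    refine le_antisymm (e.toOrderHom.monotone (Fin.castSucc_le_succ j)) ?_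
    rw [h1]
    exact e.toOrderHom.monotone (Fin.castSucc_lt_iff_succ_le.mp hjk)
  obtain ⟨e', he'⟩ := SimplexCategory.eq_σ_comp_of_not_injective' e j h2
  have key : (SimplexCategory.σ j ≫ SimplexCategory.δ j.succ) ≫ e = e := by
    rw [he']
    rw [Category.assoc, ← Category.assoc (SimplexCategory.δ j.succ),
      SimplexCategory.δ_comp_σ_succ, Category.id_comp]
  rw [← hez, ← FunctorToTypes.map_comp_apply, ← op_comp, key]

lemma prod_ext {ι : Type} (F : ι → SSet.{0}) (U : SimplexCategoryᵒᵖ)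
    (a b : (∏ᶜ F).obj U) (h : ∀ i, (Pi.π F i).app U a = (Pi.π F i).app U b) : a = b := by
  let G := (evaluation SimplexCategoryᵒᵖ (Type 0)).obj U
  have hinj : Function.Injective (piComparison G F) := by
    rw [← PreservesProduct.iso_hom]
    exact (PreservesProduct.iso G F).toEquiv.injective
  apply hinj
  apply Types.limit_ext'
  rintro ⟨i⟩
  have hc : ∀ (c : (∏ᶜ F).obj U),
      limit.π (Discrete.functor fun i => G.obj (F i)) ⟨i⟩ (piComparison G F c) =
        (Pi.π F i).app U c := fun c =>
    ConcreteCategory.congr_hom (piComparison_comp_π G F i) c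
  rw [hc, hc]
  exact h i

end SSetAux

/-- Any product of non-singular simplicial sets is
non-singular. -/
theorem nonSingular_product {ι : Type} (F : ι → SSet.{0})
    (hF : ∀ i, (F i).NonSingular) : (∏ᶜ F).NonSingular := by
  intro n x hx
  apply SSetAux.repInj_of_vert_inj
  have key : ∀ j k : Fin (n + 1), j < k → (∏ᶜ F).vert x j ≠ (∏ᶜ F).vert x k := by
    intro j k hjk hv
    obtain ⟨n', rfl⟩ : ∃ n', n = n' + 1 := by
      refine ⟨n - 1, ?_⟩
      have := hjk.trans_le (Fin.le_last k)
      have hn : 0 < n := by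
        by_contra h0
        interval_cases n
        omega
      omega
    have hjl : j ≠ Fin.last _ := (hjk.trans_le (Fin.le_last k)).ne
    set j' : Fin (n' + 1) := j.castPred hjl with hj'
    have hcs : j'.castSucc = j := Fin.castSucc_castPred j hjl
    -- componentwise
    have hcomp : ∀ i, (F i).map (SimplexCategory.σ j' ≫ SimplexCategory.δ j'.succ).op
        ((Pi.π F i).app _ x) = (Pi.π F i).app _ x := by
      intro i
      apply SSetAux.map_eq_self (F i) (hF i) _ j' k (hcs ▸ hjk)
      have hnat : ∀ (p : Fin (n' + 2)),
          (Pi.π F i).app (op ⦋0⦌) ((∏ᶜ F).vert x p) =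
            (F i).vert ((Pi.π F i).app _ x) p := by
        intro p
        dsimp [SSet.vert]
        exact FunctorToTypes.naturality (Pi.π F i) _ x
      rw [← hnat, ← hnat, hcs, hv]
    have hdeg : (∏ᶜ F).map (SimplexCategory.σ j' ≫ SimplexCategory.δ j'.succ).op x = x := by
      apply SSetAux.prod_ext
      intro i
      rw [FunctorToTypes.naturality (Pi.π F i)]
      exact hcomp i
    apply hx
    refine ⟨n', by omega, SimplexCategory.σ j',
      (∏ᶜ F).map (SimplexCategory.δ j'.succ).op x, ?_⟩
    rw [← FunctorToTypes.map_comp_apply, ← op_comp]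
    exact hdeg
  intro j k hv
  rcases lt_trichotomy j k with h | h | h
  · exact absurd hv (key j k h)
  · exact h
  · exact absurd hv.symm (key k j h)
end
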